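/- Let n ≥ 71, let s, a_1, a_2, a_3 ≥ 0, and let k = #{i ∈ {1,2,3} : a_i ≠ 0}. For EVERY choice of vectors ℓ_1, m_1, …, ℓ_s, m_s ∈ U and, for each i with a_i ≠ 0, vectors ℓ_{i,1}, m_{i,1}, …, ℓ_{i,a_i}, m_{i,a_i} ∈ U_i, the subspace W = Σ_{i : a_i≠0} ( S_3(U_i) + Σ_{j=1}^{a_i} (ℓ_{i,j}²·U + ℓ_{i,j}·m_{i,j}·U) ) + Σ_{i=1}^s (ℓ_i²·U + ℓ_i·m_i·U) of the degree-3 forms satisfies dim_ℂ W ≤ min{ Σ_{j=1}^k (−1)^{j−1} C(k,j)·C(n−24j+3,3) + 48(a_1+a_2+a_3) + (2n+1)s , C(n+3,3) }. -/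

import Mathlib

open MvPolynomial

/-- The linear form associated with a coefficient vector `v ∈ ℂ^{n+1}`. -/
noncomputable def lin {n : ℕ} (v : Fin (n + 1) → ℂ) : MvPolynomial (Fin (n + 1)) ℂ :=
  ∑ j, MvPolynomial.C (v j) * MvPolynomial.X j

/-- The subspace `f·U = {f·u : u ∈ U}` of the polynomial ring, where `U` is the
space of linear forms. -/
noncomputable def mulU {n : ℕ} (f : MvPolynomial (Fin (n + 1)) ℂ) :
    Submodule ℂ (MvPolynomial (Fin (n + 1)) ℂ) :=
  Submodule.span ℂ (Set.range fun j : Fin (n + 1) => f * MvPolynomial.X j)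

/-- The affine cone `ℓ^{d-1}·U + ℓ^{d-2}·m·U` over the tangent space to the tangential
variety `T_{n,d}` of the `d`-th Veronese variety at the point `[ℓ^{d-1} m]`. -/
noncomputable def tanCone {n : ℕ} (d : ℕ) (ℓ m : Fin (n + 1) → ℂ) :
    Submodule ℂ (MvPolynomial (Fin (n + 1)) ℂ) :=
  mulU (lin ℓ ^ (d - 1)) ⊔ mulU (lin ℓ ^ (d - 2) * lin m)

/-- `v ∈ U_{i+1}`, i.e. the coordinates of `v` indexed by `{24i, …, 24i+23}` vanish. -/
def memU {n : ℕ} (i : Fin 3) (v : Fin (n + 1) → ℂ) : Prop :=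
  ∀ j : Fin (n + 1), 24 * (i : ℕ) ≤ (j : ℕ) → (j : ℕ) < 24 * (i : ℕ) + 24 → v j = 0

/-- `S_3(U_{i+1})`: the span of all products of three linear forms belonging to `U_{i+1}`. -/
noncomputable def S3U {n : ℕ} (i : Fin 3) : Submodule ℂ (MvPolynomial (Fin (n + 1)) ℂ) :=
  Submodule.span ℂ
    {p | ∃ a b c : Fin (n + 1) → ℂ,
      memU i a ∧ memU i b ∧ memU i c ∧ p = lin a * lin b * lin c}

/-- `v ∈ U_K`, the span of the variables `x_0, …, x_71`. -/
def memK {n : ℕ} (v : Fin (n + 1) → ℂ) : Prop :=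
  ∀ j : Fin (n + 1), 72 ≤ (j : ℕ) → v j = 0

/-- `S_3(U_K)`: the span of all products of three linear forms in `x_0, …, x_71`. -/
noncomputable def S3K (n : ℕ) : Submodule ℂ (MvPolynomial (Fin (n + 1)) ℂ) :=
  Submodule.span ℂ
    {p | ∃ a b c : Fin (n + 1) → ℂ,
      memK a ∧ memK b ∧ memK c ∧ p = lin a * lin b * lin c}

/-- The alternating sum `Σ_{j=1}^k (−1)^{j−1} C(k,j) · C(n−24j+3, 3)` (with the convention
`C(m,3) = 0` for `m < 3`, realized by truncated subtraction `n+3−24j`). -/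
def altsum (n k : ℕ) : ℤ :=
  ∑ j ∈ Finset.Icc 1 k, (-1 : ℤ) ^ (j - 1) * (k.choose j : ℤ) * ((n + 3 - 24 * j).choose 3 : ℤ)

/-- `k = #{i : a_i ≠ 0}`. -/
def kcount (a : Fin 3 → ℕ) : ℕ := (Finset.univ.filter fun i => a i ≠ 0).card

/-- The expected dimension `w(n, s; a_1, a_2, a_3)`, as an integer. -/
def expdimZ (n s : ℕ) (a : Fin 3 → ℕ) : ℤ :=
  min (altsum n (kcount a) + 48 * ((a 0 + a 1 + a 2 : ℕ) : ℤ) + (2 * n + 1) * s)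
    (((n + 3).choose 3 : ℤ))

/-- The subspace `W(n, s; a_1, a_2, a_3)` determined by the given points. -/
noncomputable def Wspace {n s : ℕ} {a : Fin 3 → ℕ}
    (ℓ m : Fin s → Fin (n + 1) → ℂ)
    (ℓ' m' : (i : Fin 3) → Fin (a i) → Fin (n + 1) → ℂ) :
    Submodule ℂ (MvPolynomial (Fin (n + 1)) ℂ) :=
  (⨆ i : {i : Fin 3 // a i ≠ 0},
      (S3U i.1 ⊔ ⨆ j : Fin (a i.1), tanCone 3 (ℓ' i.1 j) (m' i.1 j)))
    ⊔ ⨆ i : Fin s, tanCone 3 (ℓ i) (m i)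

/-- The statement `T(n, s; a_1, a_2, a_3)`: some choice of points realizes the expected
dimension `w(n, s; a_1, a_2, a_3)`. -/
def TStmt (n s : ℕ) (a : Fin 3 → ℕ) : Prop :=
  ∃ (ℓ m : Fin s → Fin (n + 1) → ℂ)
    (ℓ' m' : (i : Fin 3) → Fin (a i) → Fin (n + 1) → ℂ),
    (∀ (i : Fin 3) (j : Fin (a i)), memU i (ℓ' i j) ∧ memU i (m' i j)) ∧
    (Module.finrank ℂ (Wspace ℓ m ℓ' m') : ℤ) = expdimZ n s a

/-- `s_1(n) = 48k² + (11+4r)k + ⌊(4r²+22r+33)/48⌋` where `n = 24k + r`. -/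
def s1 (n : ℕ) : ℕ :=
  48 * (n / 24) ^ 2 + (11 + 4 * (n % 24)) * (n / 24) +
    (4 * (n % 24) ^ 2 + 22 * (n % 24) + 33) / 48

/-- `s_2(n) = s_1(n) + 1`. -/
def s2 (n : ℕ) : ℕ := s1 n + 1

/-- `t(n) = 4n − 37`. -/
def tfun (n : ℕ) : ℕ := 4 * n - 37

/-- The expected codimension `c(n)` of `W(n, t(n); s_1(n−24), 0, 0)`. -/
def cInt (n : ℕ) : ℤ :=
  ((n + 3).choose 3 : ℤ) - ((n - 21).choose 3 : ℤ) - (tfun n : ℤ) * (2 * n + 1) -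
    48 * (s1 (n - 24) : ℤ)

-- AUX START
open Submodule Pointwise Finset Module

noncomputable def phi {n : ℕ} (w : Sym (Fin (n+1)) 3) : MvPolynomial (Fin (n+1)) ℂ :=
  ((w : Multiset (Fin (n+1))).map MvPolynomial.X).prod

lemma card_finset_sym {α : Type*} [DecidableEq α] (s : Finset α) (k : ℕ) :
    (s.sym k).card = (s.card + k - 1).choose k := by
  classical
  have himg : s.sym k =
      Finset.image (Sym.map (Subtype.val : {x // x ∈ s} → α)) Finset.univ := by
    ext w
    simp only [Finset.mem_image, Finset.mem_univ, true_and, Finset.mem_sym_iff]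
    constructor
    · intro h
      refine ⟨Sym.map (fun x => ⟨x.1, h _ x.2⟩) w.attach, ?_⟩
      rw [Sym.map_map]
      exact Sym.attach_map_coe w
    · rintro ⟨w', rfl⟩ a ha
      rw [Sym.mem_map] at ha
      obtain ⟨b, _, rfl⟩ := ha
      exact b.2
  rw [himg, Finset.card_image_of_injective _ (Sym.map_injective Subtype.val_injective _),
    Finset.card_univ, Sym.card_sym_eq_choose, Fintype.card_coe]

lemma lin_mem_span {n : ℕ} {s : Finset (Fin (n+1))} {v : Fin (n+1) → ℂ}
    (h : ∀ j, v j ≠ 0 → j ∈ s) :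
    lin v ∈ span ℂ (MvPolynomial.X '' (s : Set (Fin (n+1)))) := by
  rw [lin]
  refine Submodule.sum_mem _ fun j _ => ?_
  by_cases hv : v j = 0
  · simp [hv]
  · rw [← smul_eq_C_mul]
    exact Submodule.smul_mem _ _ (subset_span ⟨j, h j hv, rfl⟩)

lemma triple_mem {n : ℕ} (s : Finset (Fin (n+1))) {f g h : MvPolynomial (Fin (n+1)) ℂ}
    (hf : f ∈ span ℂ (MvPolynomial.X '' (s : Set (Fin (n+1)))))
    (hg : g ∈ span ℂ (MvPolynomial.X '' (s : Set (Fin (n+1)))))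
    (hh : h ∈ span ℂ (MvPolynomial.X '' (s : Set (Fin (n+1))))) :
    f * g * h ∈ span ℂ (phi '' ((s.sym 3 : Finset (Sym (Fin (n+1)) 3)) : Set (Sym (Fin (n+1)) 3))) := by
  set S : Set (MvPolynomial (Fin (n+1)) ℂ) := MvPolynomial.X '' (s : Set (Fin (n+1)))
  have h1 : f * g * h ∈ span ℂ (S * S * S) := by
    rw [← Submodule.span_mul_span, ← Submodule.span_mul_span]
    exact Submodule.mul_mem_mul (Submodule.mul_mem_mul hf hg) hh
  refine span_le.mpr ?_ h1
  rintro p ⟨_, ⟨_, ⟨a, ha, rfl⟩, _, ⟨b, hb, rfl⟩, rfl⟩, _, ⟨c, hc, rfl⟩, rfl⟩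
  refine subset_span ⟨⟨(a ::ₘ b ::ₘ {c} : Multiset (Fin (n+1))), by simp⟩, ?_, ?_⟩
  · refine Finset.mem_coe.mpr (Finset.mem_sym_iff.mpr ?_)
    intro x hx
    simp only [Sym.mem_mk, Multiset.mem_cons, Multiset.mem_singleton] at hx
    rcases hx with rfl | rfl | rfl <;> assumption
  · simp only [phi, Sym.coe_mk, Multiset.map_cons, Multiset.map_singleton,
      Multiset.prod_cons, Multiset.prod_singleton]
    ring

def blk (n : ℕ) (i : Fin 3) : Finset (Fin (n+1)) :=
  Finset.univ.filter fun j => 24 * (i : ℕ) ≤ (j : ℕ) ∧ (j : ℕ) < 24 * (i : ℕ) + 24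

lemma card_blk {n : ℕ} (hn : 71 ≤ n) (i : Fin 3) : (blk n i).card = 24 := by
  have hlt : ∀ m' ∈ Finset.Ico (24 * (i : ℕ)) (24 * (i : ℕ) + 24), m' < n + 1 := by
    intro m' hm'
    rw [Finset.mem_Ico] at hm'
    have : (i : ℕ) ≤ 2 := by omega
    omega
  have : blk n i = (Finset.Ico (24 * (i : ℕ)) (24 * (i : ℕ) + 24)).attachFin hlt := by
    ext j
    simp [blk, Finset.mem_attachFin, Finset.mem_Ico]
  rw [this, Finset.card_attachFin, Nat.card_Ico]
  omega

lemma card_blk_le {n : ℕ} (i : Fin 3) : (blk n i).card ≤ 24 := by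
  classical
  have : (blk n i).card ≤ (Finset.Ico (24 * (i : ℕ)) (24 * (i : ℕ) + 24)).card := by
    refine Finset.card_le_card_of_injOn (fun j => (j : ℕ)) ?_ ?_
    · intro j hj
      simp only [blk, Finset.mem_filter] at hj
      rw [Finset.mem_coe, Finset.mem_Ico]
      exact (Finset.mem_filter.mp (Finset.mem_coe.mp hj)).2
    · intro x _ y _ hxy
      exact Fin.ext hxy
  simpa [Nat.card_Ico] using this

lemma blk_disjoint {n : ℕ} {i i' : Fin 3} (h : i ≠ i') : Disjoint (blk n i) (blk n i') := by
  rw [Finset.disjoint_left]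
  intro j hj hj'
  simp only [blk, Finset.mem_filter] at hj hj'
  have : (i : ℕ) ≠ (i' : ℕ) := fun hc => h (Fin.ext hc)
  omega

lemma S3U_le_span {n : ℕ} (i : Fin 3) :
    S3U (n := n) i ≤ span ℂ (phi '' (((blk n i)ᶜ).sym 3 : Finset (Sym (Fin (n+1)) 3))) := by
  rw [S3U, span_le]
  rintro p ⟨a, b, c, ha, hb, hc, rfl⟩
  have key : ∀ v : Fin (n+1) → ℂ, memU i v →
      lin v ∈ span ℂ (MvPolynomial.X '' (((blk n i)ᶜ : Finset (Fin (n+1))) : Set (Fin (n+1)))) := by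
    intro v hv
    apply lin_mem_span
    intro j hj
    rw [Finset.mem_compl]
    intro hjb
    simp only [blk, Finset.mem_filter] at hjb
    exact hj (hv j hjb.2.1 hjb.2.2)
  exact triple_mem _ (key a ha) (key b hb) (key c hc)

lemma lin_single {n : ℕ} (j : Fin (n+1)) :
    lin (Pi.single j 1 : Fin (n+1) → ℂ) = MvPolynomial.X j := by
  rw [lin, Finset.sum_eq_single j]
  · simp
  · intro b _ hb
    rw [Pi.single_eq_of_ne hb]
    simp
  · simp

lemma mulU_le {n : ℕ} (f : MvPolynomial (Fin (n+1)) ℂ)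
    (S : Submodule ℂ (MvPolynomial (Fin (n+1)) ℂ))
    (h : ∀ j, f * MvPolynomial.X j ∈ S) : mulU f ≤ S := by
  rw [mulU, span_le]
  rintro p ⟨j, rfl⟩
  exact h j

lemma mul_lin_mem {n : ℕ} (f : MvPolynomial (Fin (n+1)) ℂ) (v : Fin (n+1) → ℂ) :
    f * lin v ∈ mulU f := by
  rw [lin, Finset.mul_sum]
  refine Submodule.sum_mem _ fun j _ => ?_
  have : f * (MvPolynomial.C (v j) * MvPolynomial.X j) = v j • (f * MvPolynomial.X j) := by
    rw [smul_eq_C_mul]; ring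
  rw [this]
  exact Submodule.smul_mem _ _ (subset_span ⟨j, rfl⟩)

noncomputable def extra (n : ℕ) (i : Fin 3) (l m' : Fin (n+1) → ℂ) :
    Finset (MvPolynomial (Fin (n+1)) ℂ) :=
  ((blk n i).image fun j => lin l ^ 2 * MvPolynomial.X j) ∪
    ((blk n i).image fun j => lin l * lin m' * MvPolynomial.X j)

lemma card_extra {n : ℕ} (i : Fin 3) (l m' : Fin (n+1) → ℂ) :
    (extra n i l m').card ≤ 48 := by
  classical
  calc (extra n i l m').card ≤ _ + _ := Finset.card_union_le _ _
    _ ≤ 48 := by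
        have h1 := Finset.card_image_le (s := blk n i)
          (f := fun j => lin l ^ 2 * MvPolynomial.X j)
        have h2 := Finset.card_image_le (s := blk n i)
          (f := fun j => lin l * lin m' * MvPolynomial.X j)
        have := card_blk_le (n := n) i
        omega

lemma memU_single {n : ℕ} {i : Fin 3} {j : Fin (n+1)} (hj : j ∉ blk n i) :
    memU i (Pi.single j 1 : Fin (n+1) → ℂ) := by
  intro j' h1 h2
  have hne : j' ≠ j := by
    rintro rfl
    exact hj (by simp [blk, h1, h2])
  rw [Pi.single_eq_of_ne hne]

lemma tanCone_le_blocked {n : ℕ} {i : Fin 3} {l m' : Fin (n+1) → ℂ}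
    (hl : memU i l) (hm : memU i m') :
    tanCone 3 l m' ≤ S3U i ⊔ span ℂ ((extra n i l m' : Finset (MvPolynomial (Fin (n+1)) ℂ)) : Set (MvPolynomial (Fin (n+1)) ℂ)) := by
  have h31 : (3 : ℕ) - 1 = 2 := rfl
  have h32 : (3 : ℕ) - 2 = 1 := rfl
  rw [tanCone, h31, h32, pow_one]
  apply sup_le
  · apply mulU_le
    intro j
    by_cases hj : j ∈ blk n i
    · exact Submodule.mem_sup_right (subset_span (Finset.mem_coe.mpr (Finset.mem_union_left _
        (Finset.mem_image_of_mem _ hj))))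
    · apply Submodule.mem_sup_left
      apply subset_span
      refine ⟨l, l, Pi.single j 1, hl, hl, memU_single hj, ?_⟩
      rw [lin_single, sq]
  · apply mulU_le
    intro j
    by_cases hj : j ∈ blk n i
    · exact Submodule.mem_sup_right (subset_span (Finset.mem_coe.mpr (Finset.mem_union_right _
        (Finset.mem_image_of_mem _ hj))))
    · exact Submodule.mem_sup_left (subset_span
        ⟨l, m', Pi.single j 1, hl, hm, memU_single hj, by rw [lin_single]⟩)

instance mulU_fd {n : ℕ} (f : MvPolynomial (Fin (n+1)) ℂ) : FiniteDimensional ℂ (mulU f) :=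
  FiniteDimensional.span_of_finite _ (Set.finite_range _)

instance tanCone_fd {n : ℕ} (d : ℕ) (l m' : Fin (n+1) → ℂ) :
    FiniteDimensional ℂ (tanCone d l m') :=
  Submodule.finiteDimensional_sup _ _

lemma finrank_mulU_le {n : ℕ} (f : MvPolynomial (Fin (n+1)) ℂ) :
    finrank ℂ (mulU f) ≤ n + 1 := by
  classical
  have : mulU f = span ℂ ((Finset.univ.image fun j : Fin (n+1) => f * MvPolynomial.X j :
      Finset (MvPolynomial (Fin (n+1)) ℂ)) : Set (MvPolynomial (Fin (n+1)) ℂ)) := by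
    rw [mulU, Finset.coe_image, Finset.coe_univ, Set.image_univ]
  rw [this]
  calc finrank ℂ (span ℂ _) ≤ (Finset.univ.image fun j : Fin (n+1) => f * MvPolynomial.X j).card :=
        finrank_span_finset_le_card _
    _ ≤ (Finset.univ : Finset (Fin (n+1))).card := Finset.card_image_le
    _ = n + 1 := by simp

lemma finrank_sup_le' {M : Type*} [AddCommGroup M] [Module ℂ M]
    (p q : Submodule ℂ M) [FiniteDimensional ℂ p] [FiniteDimensional ℂ q] :
    finrank ℂ (p ⊔ q : Submodule ℂ M) ≤ finrank ℂ p + finrank ℂ q := by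
  have := Submodule.finrank_sup_add_finrank_inf_eq p q
  omega

lemma finrank_finset_sup_le {M ι : Type*} [AddCommGroup M] [Module ℂ M] (s : Finset ι)
    (p : ι → Submodule ℂ M) [∀ i, FiniteDimensional ℂ (p i)] :
    finrank ℂ ↥(s.sup p) ≤ ∑ i ∈ s, finrank ℂ (p i) := by
  classical
  induction s using Finset.induction_on with
  | empty => simp
  | @insert a s ha ih =>
      rw [Finset.sup_insert, Finset.sum_insert ha]
      exact (finrank_sup_le' _ _).trans (by omega)

lemma finrank_iSup_le {M ι : Type*} [AddCommGroup M] [Module ℂ M] [Fintype ι]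
    (p : ι → Submodule ℂ M) [∀ i, FiniteDimensional ℂ (p i)] :
    finrank ℂ ↥(⨆ i, p i : Submodule ℂ M) ≤ ∑ i, finrank ℂ (p i) := by
  rw [← Finset.sup_univ_eq_iSup]
  exact finrank_finset_sup_le _ _

lemma finrank_tanCone_le {n : ℕ} (l m' : Fin (n+1) → ℂ) :
    finrank ℂ (tanCone 3 l m') ≤ 2 * n + 1 := by
  have h31 : (3 : ℕ) - 1 = 2 := rfl
  have h32 : (3 : ℕ) - 2 = 1 := rfl
  by_cases hl : lin l = 0
  · have : tanCone 3 l m' = ⊥ := by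
      rw [tanCone, h31, h32, pow_one, hl]
      have h1 : mulU (0 : MvPolynomial (Fin (n+1)) ℂ) = ⊥ := by
        refine le_antisymm (mulU_le _ _ fun j => by simp) bot_le
      have h2 : (0 : MvPolynomial (Fin (n+1)) ℂ) ^ 2 = 0 := by ring
      have h3 : (0 : MvPolynomial (Fin (n+1)) ℂ) * lin m' = 0 := by ring
      rw [h2, h3, h1, sup_idem]
    rw [this, finrank_bot]
    omega
  by_cases hm : lin m' = 0
  · have : tanCone 3 l m' = mulU (lin l ^ 2) := by
      rw [tanCone, h31, h32, pow_one, hm, mul_zero]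
      have h1 : mulU (0 : MvPolynomial (Fin (n+1)) ℂ) = ⊥ :=
        le_antisymm (mulU_le _ _ fun j => by simp) bot_le
      rw [h1, sup_bot_eq]
    rw [this]
    have := finrank_mulU_le (n := n) (lin l ^ 2)
    omega
  · rw [tanCone, h31, h32, pow_one]
    set A := mulU (lin l ^ 2)
    set B := mulU (lin l * lin m')
    have hmem : lin l ^ 2 * lin m' ∈ A ⊓ B := by
      constructor
      · exact mul_lin_mem _ _
      · have : lin l ^ 2 * lin m' = lin l * lin m' * lin l := by ring
        rw [this]
        exact mul_lin_mem _ _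
    have hne : lin l ^ 2 * lin m' ≠ 0 := mul_ne_zero (pow_ne_zero _ hl) hm
    have h1 : 1 ≤ finrank ℂ (A ⊓ B : Submodule ℂ (MvPolynomial (Fin (n+1)) ℂ)) := by
      have hle : span ℂ {lin l ^ 2 * lin m'} ≤ A ⊓ B := by
        rw [span_le, Set.singleton_subset_iff]; exact hmem
      have : FiniteDimensional ℂ (A ⊓ B : Submodule ℂ (MvPolynomial (Fin (n+1)) ℂ)) :=
        Submodule.finiteDimensional_inf_left A B
      calc 1 = finrank ℂ (span ℂ {lin l ^ 2 * lin m'}) := (finrank_span_singleton hne).symm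
        _ ≤ finrank ℂ (A ⊓ B : Submodule ℂ (MvPolynomial (Fin (n+1)) ℂ)) :=
            Submodule.finrank_mono hle
    have heq := Submodule.finrank_sup_add_finrank_inf_eq A B
    have hA : finrank ℂ ↥A ≤ n + 1 := finrank_mulU_le (n := n) (lin l ^ 2)
    have hB : finrank ℂ ↥B ≤ n + 1 := finrank_mulU_le (n := n) (lin l * lin m')
    omega

lemma tanCone_le_univ {n : ℕ} (l m' : Fin (n+1) → ℂ) :
    tanCone 3 l m' ≤ span ℂ (phi ''
      (((Finset.univ : Finset (Fin (n+1))).sym 3 : Finset (Sym (Fin (n+1)) 3)) :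
        Set (Sym (Fin (n+1)) 3))) := by
  have h31 : (3 : ℕ) - 1 = 2 := rfl
  have h32 : (3 : ℕ) - 2 = 1 := rfl
  rw [tanCone, h31, h32, pow_one]
  have hX : ∀ j : Fin (n+1), (MvPolynomial.X j : MvPolynomial (Fin (n+1)) ℂ) ∈
      span ℂ (MvPolynomial.X '' ((Finset.univ : Finset (Fin (n+1))) : Set (Fin (n+1)))) := by
    intro j
    exact subset_span ⟨j, by simp, rfl⟩
  have hlin : ∀ v : Fin (n+1) → ℂ, lin v ∈
      span ℂ (MvPolynomial.X '' ((Finset.univ : Finset (Fin (n+1))) : Set (Fin (n+1)))) :=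
    fun v => lin_mem_span fun j _ => Finset.mem_univ j
  apply sup_le
  · apply mulU_le
    intro j
    have : lin l ^ 2 * MvPolynomial.X j = lin l * lin l * MvPolynomial.X j := by ring
    rw [this]
    exact triple_mem _ (hlin l) (hlin l) (hX j)
  · apply mulU_le
    intro j
    exact triple_mem _ (hlin l) (hlin m') (hX j)

set_option maxHeartbeats 1000000 in
lemma card_biUnion_eq {n : ℕ} (hn : 71 ≤ n) (T : Finset (Fin 3)) :
    ((T.biUnion fun i => ((blk n i)ᶜ).sym 3).card : ℤ) = altsum n T.card := by
  classical
  set S : Fin 3 → Finset (Sym (Fin (n+1)) 3) := fun i => ((blk n i)ᶜ).sym 3 with hS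
  set c1 : ℕ := (n - 21).choose 3
  set c2 : ℕ := (n - 45).choose 3
  set c3 : ℕ := (n - 69).choose 3
  have hcompl : ∀ i : Fin 3, ((blk n i)ᶜ : Finset (Fin (n+1))).card = n - 23 := by
    intro i
    rw [Finset.card_compl, card_blk hn]
    simp only [Fintype.card_fin]
    omega
  have hc1 : ∀ i, (S i).card = c1 := by
    intro i
    rw [hS, card_finset_sym, hcompl]
    congr 1
    omega
  have hc2 : ∀ i i', i ≠ i' → (S i ∩ S i').card = c2 := by
    intro i i' h
    rw [hS]
    simp only
    rw [← Finset.sym_inter, ← Finset.compl_union, card_finset_sym, Finset.card_compl,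
      Finset.card_union_of_disjoint (blk_disjoint h), card_blk hn, card_blk hn]
    simp only [Fintype.card_fin]
    congr 1
    omega
  have hc3 : (S 0 ∩ S 1 ∩ S 2).card = c3 := by
    rw [hS]
    simp only
    rw [← Finset.sym_inter, ← Finset.sym_inter, ← Finset.compl_union, ← Finset.compl_union,
      card_finset_sym, Finset.card_compl]
    have hd1 : Disjoint (blk n 0) (blk n 1) := blk_disjoint (by decide)
    have hd2 : Disjoint (blk n 0 ∪ blk n 1) (blk n 2) := by
      rw [Finset.disjoint_union_left]
      exact ⟨blk_disjoint (by decide), blk_disjoint (by decide)⟩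
    rw [Finset.card_union_of_disjoint hd2, Finset.card_union_of_disjoint hd1,
      card_blk hn, card_blk hn, card_blk hn]
    simp only [Fintype.card_fin]
    congr 1
    omega
  have ha1 : altsum n 1 = (c1 : ℤ) := by
    rw [altsum, Finset.Icc_self, Finset.sum_singleton]
    have e1 : n + 3 - 24 * 1 = n - 21 := by omega
    rw [e1]
    simp [c1]
  have ha2 : altsum n 2 = 2 * (c1 : ℤ) - (c2 : ℤ) := by
    rw [altsum, Finset.sum_Icc_succ_top (by norm_num), Finset.Icc_self, Finset.sum_singleton]
    have e1 : n + 3 - 24 * 1 = n - 21 := by omega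
    have e2 : n + 3 - 24 * 2 = n - 45 := by omega
    rw [e1, e2]
    simp [c1, c2]
    ring
  have ha3 : altsum n 3 = 3 * (c1 : ℤ) - 3 * (c2 : ℤ) + (c3 : ℤ) := by
    rw [altsum, Finset.sum_Icc_succ_top (by norm_num), Finset.sum_Icc_succ_top (by norm_num),
      Finset.Icc_self, Finset.sum_singleton]
    have e1 : n + 3 - 24 * 1 = n - 21 := by omega
    have e2 : n + 3 - 24 * 2 = n - 45 := by omega
    have e3 : n + 3 - 24 * 3 = n - 69 := by omega
    rw [e1, e2, e3]
    simp [c1, c2, c3]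
    ring
  have hcases : T = ∅ ∨ T = {0} ∨ T = {1} ∨ T = {2} ∨ T = {0, 1} ∨ T = {0, 2} ∨
      T = {1, 2} ∨ T = {0, 1, 2} := by
    have hext : True := trivial
    by_cases h0 : (0 : Fin 3) ∈ T <;> by_cases h1 : (1 : Fin 3) ∈ T <;>
      by_cases h2 : (2 : Fin 3) ∈ T
    · exact Or.inr (Or.inr (Or.inr (Or.inr (Or.inr (Or.inr (Or.inr
        (by ext x; fin_cases x <;> simp_all)))))))
    · exact Or.inr (Or.inr (Or.inr (Or.inr (Or.inl (by ext x; fin_cases x <;> simp_all)))))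
    · exact Or.inr (Or.inr (Or.inr (Or.inr (Or.inr (Or.inl
        (by ext x; fin_cases x <;> simp_all))))))
    · exact Or.inr (Or.inl (by ext x; fin_cases x <;> simp_all))
    · exact Or.inr (Or.inr (Or.inr (Or.inr (Or.inr (Or.inr (Or.inl
        (by ext x; fin_cases x <;> simp_all)))))))
    · exact Or.inr (Or.inr (Or.inl (by ext x; fin_cases x <;> simp_all)))
    · exact Or.inr (Or.inr (Or.inr (Or.inl (by ext x; fin_cases x <;> simp_all))))
    · exact Or.inl (by ext x; fin_cases x <;> simp_all)
  have hunion2 : ∀ i i', i ≠ i' → ((({i, i'} : Finset (Fin 3)).biUnion S).card : ℤ) =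
      2 * (c1 : ℤ) - (c2 : ℤ) := by
    intro i i' h
    have hb : ({i, i'} : Finset (Fin 3)).biUnion S = S i ∪ S i' := by
      rw [Finset.biUnion_insert, Finset.singleton_biUnion]
    have := Finset.card_union_add_card_inter (S i) (S i')
    rw [hc1 i, hc1 i', hc2 i i' h] at this
    rw [hb]
    push_cast
    omega
  rcases hcases with rfl | rfl | rfl | rfl | rfl | rfl | rfl | rfl
  · simp [altsum]
  · rw [Finset.singleton_biUnion, hc1, Finset.card_singleton, ha1]
  · rw [Finset.singleton_biUnion, hc1, Finset.card_singleton, ha1]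
  · rw [Finset.singleton_biUnion, hc1, Finset.card_singleton, ha1]
  · rw [hunion2 0 1 (by decide), (by decide : ({0,1} : Finset (Fin 3)).card = 2), ha2]
  · rw [hunion2 0 2 (by decide), (by decide : ({0,2} : Finset (Fin 3)).card = 2), ha2]
  · rw [hunion2 1 2 (by decide), (by decide : ({1,2} : Finset (Fin 3)).card = 2), ha2]
  · have hb : ({0, 1, 2} : Finset (Fin 3)).biUnion S = S 0 ∪ S 1 ∪ S 2 := by
      rw [Finset.biUnion_insert, Finset.biUnion_insert, Finset.singleton_biUnion,
        Finset.union_assoc]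
    have e1 := Finset.card_union_add_card_inter (S 0) (S 1)
    have e2 := Finset.card_union_add_card_inter (S 0 ∪ S 1) (S 2)
    have e3 : (S 0 ∪ S 1) ∩ S 2 = (S 0 ∩ S 2) ∪ (S 1 ∩ S 2) :=
      Finset.union_inter_distrib_right _ _ _
    have e4 := Finset.card_union_add_card_inter (S 0 ∩ S 2) (S 1 ∩ S 2)
    have e5 : (S 0 ∩ S 2) ∩ (S 1 ∩ S 2) = S 0 ∩ S 1 ∩ S 2 := by
      ext x
      simp only [Finset.mem_inter]
      exact ⟨fun h => ⟨⟨h.1.1, h.2.1⟩, h.1.2⟩, fun h => ⟨⟨h.1.1, h.2⟩, h.1.2, h.2⟩⟩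
    rw [e5, hc3, hc2 0 2 (by decide), hc2 1 2 (by decide)] at e4
    rw [e3] at e2
    rw [hc1 0, hc1 1, hc2 0 1 (by decide)] at e1
    rw [hc1 2] at e2
    rw [hb, (by decide : ({0,1,2} : Finset (Fin 3)).card = 3), ha3]
    push_cast
    omega


/-- Proposition 3.5: for every choice of points, the subspace `W(n,s;a_1,a_2,a_3)` has
dimension at most the expected dimension `w(n,s;a_1,a_2,a_3)`. -/
theorem Wspace_dim_le_expected (n : ℕ) (hn : 71 ≤ n) (s : ℕ) (a : Fin 3 → ℕ)
    (ℓ m : Fin s → Fin (n + 1) → ℂ)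
    (ℓ' m' : (i : Fin 3) → Fin (a i) → Fin (n + 1) → ℂ)
    (hmem : ∀ (i : Fin 3) (j : Fin (a i)), memU i (ℓ' i j) ∧ memU i (m' i j)) :
    (Module.finrank ℂ (Wspace ℓ m ℓ' m') : ℤ) ≤ expdimZ n s a := by
  rw [expdimZ, le_min_iff]
  set T : Finset (Fin 3) := Finset.univ.filter (fun i => a i ≠ 0) with hT
  have hkT : kcount a = T.card := rfl
  constructor
  · -- main bound
    set MB : Finset (MvPolynomial (Fin (n+1)) ℂ) :=
      (T.biUnion fun i => ((blk n i)ᶜ).sym 3).image phi with hMB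
    set P : Submodule ℂ (MvPolynomial (Fin (n+1)) ℂ) := span ℂ (MB : Set _) with hP
    set Q : {i : Fin 3 // a i ≠ 0} → Submodule ℂ (MvPolynomial (Fin (n+1)) ℂ) :=
      fun i => ⨆ j : Fin (a i.1),
        span ℂ ((extra n i.1 (ℓ' i.1 j) (m' i.1 j) : Finset _) : Set _) with hQ
    set R : Submodule ℂ (MvPolynomial (Fin (n+1)) ℂ) :=
      ⨆ i : Fin s, tanCone 3 (ℓ i) (m i) with hR
    have hS3le : ∀ i : {i : Fin 3 // a i ≠ 0}, S3U i.1 ≤ P := by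
      intro i
      refine (S3U_le_span i.1).trans ?_
      apply span_mono
      rw [hMB, Finset.coe_image]
      apply Set.image_mono
      intro x hx
      exact Finset.mem_coe.mpr (Finset.mem_biUnion.mpr
        ⟨i.1, by simp [hT, i.2], Finset.mem_coe.mp hx⟩)
    have hWle : Wspace ℓ m ℓ' m' ≤ (P ⊔ ⨆ i, Q i) ⊔ R := by
      rw [Wspace]
      apply sup_le
      · refine le_trans ?_ le_sup_left
        apply iSup_le; intro i
        apply sup_le
        · exact (hS3le i).trans le_sup_left
        · apply iSup_le; intro j
          refine (tanCone_le_blocked (hmem i.1 j).1 (hmem i.1 j).2).trans ?_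
          apply sup_le
          · exact (hS3le i).trans le_sup_left
          · refine le_trans ?_ le_sup_right
            have hj : span ℂ ((extra n i.1 (ℓ' i.1 j) (m' i.1 j) : Finset _) :
                Set (MvPolynomial (Fin (n+1)) ℂ)) ≤ Q i := by
              simp only [hQ]
              exact le_iSup (fun j => span ℂ ((extra n i.1 (ℓ' i.1 j) (m' i.1 j) : Finset _) :
                Set (MvPolynomial (Fin (n+1)) ℂ))) j
            exact hj.trans (le_iSup Q i)
      · exact le_sup_right
    haveI : FiniteDimensional ℂ P := FiniteDimensional.span_of_finite _ MB.finite_toSet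
    haveI hfdE : ∀ (i : {i : Fin 3 // a i ≠ 0}) (j : Fin (a i.1)),
        FiniteDimensional ℂ
          (span ℂ ((extra n i.1 (ℓ' i.1 j) (m' i.1 j) : Finset _) :
            Set (MvPolynomial (Fin (n+1)) ℂ))) :=
      fun i j => FiniteDimensional.span_of_finite _ (Finset.finite_toSet _)
    haveI hfdQ : ∀ i, FiniteDimensional ℂ (Q i) :=
      fun i => Submodule.finiteDimensional_iSup _
    haveI : FiniteDimensional ℂ R := Submodule.finiteDimensional_iSup _
    haveI : FiniteDimensional ℂ (⨆ i, Q i : Submodule ℂ (MvPolynomial (Fin (n+1)) ℂ)) :=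
      Submodule.finiteDimensional_iSup _
    have h0 : finrank ℂ (Wspace ℓ m ℓ' m') ≤ finrank ℂ ((P ⊔ ⨆ i, Q i) ⊔ R :
        Submodule ℂ (MvPolynomial (Fin (n+1)) ℂ)) :=
      Submodule.finrank_mono hWle
    have h1 : finrank ℂ ((P ⊔ ⨆ i, Q i) ⊔ R : Submodule ℂ (MvPolynomial (Fin (n+1)) ℂ)) ≤
        finrank ℂ P + finrank ℂ (⨆ i, Q i : Submodule ℂ (MvPolynomial (Fin (n+1)) ℂ)) +
          finrank ℂ R :=
      (finrank_sup_le' _ _).trans (by have := finrank_sup_le' P (⨆ i, Q i); omega)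
    have hPc : finrank ℂ P ≤ (T.biUnion fun i => ((blk n i)ᶜ).sym 3).card :=
      (finrank_span_finset_le_card MB).trans Finset.card_image_le
    have hQc : ∀ i, finrank ℂ (Q i) ≤ 48 * a i.1 := by
      intro i
      refine (finrank_iSup_le _).trans ?_
      calc ∑ j : Fin (a i.1), finrank ℂ
            (span ℂ ((extra n i.1 (ℓ' i.1 j) (m' i.1 j) : Finset _) :
              Set (MvPolynomial (Fin (n+1)) ℂ)))
          ≤ ∑ _j : Fin (a i.1), 48 :=
            Finset.sum_le_sum fun j _ =>
              (finrank_span_finset_le_card _).trans (card_extra _ _ _)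
        _ = 48 * a i.1 := by simp [mul_comm]
    have hQs : finrank ℂ (⨆ i, Q i : Submodule ℂ (MvPolynomial (Fin (n+1)) ℂ)) ≤
        48 * (a 0 + a 1 + a 2) := by
      refine (finrank_iSup_le _).trans ?_
      calc ∑ i : {i : Fin 3 // a i ≠ 0}, finrank ℂ (Q i)
          ≤ ∑ i : {i : Fin 3 // a i ≠ 0}, 48 * a i.1 :=
            Finset.sum_le_sum fun i _ => hQc i
        _ = ∑ i ∈ T, 48 * a i := (Finset.sum_subtype T (by simp [hT]) fun i => 48 * a i).symm
        _ ≤ ∑ i : Fin 3, 48 * a i :=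
            Finset.sum_le_sum_of_subset (Finset.subset_univ T)
        _ = 48 * (a 0 + a 1 + a 2) := by rw [Fin.sum_univ_three]; ring
    have hRc : finrank ℂ R ≤ s * (2 * n + 1) := by
      refine (finrank_iSup_le _).trans ?_
      calc ∑ i : Fin s, finrank ℂ (tanCone 3 (ℓ i) (m i))
          ≤ ∑ _i : Fin s, (2 * n + 1) := Finset.sum_le_sum fun i _ => finrank_tanCone_le _ _
        _ = s * (2 * n + 1) := by simp [mul_comm]
    have hcard := card_biUnion_eq hn T
    rw [hkT]
    have hN : finrank ℂ (Wspace ℓ m ℓ' m') ≤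
        (T.biUnion fun i => ((blk n i)ᶜ).sym 3).card + 48 * (a 0 + a 1 + a 2) +
          s * (2 * n + 1) := by
      omega
    have hZ := (Nat.cast_le (α := ℤ)).mpr hN
    push_cast at hZ ⊢
    linarith [hcard, hZ]
  · -- bound by the full space of cubics
    have hle : Wspace ℓ m ℓ' m' ≤ span ℂ (phi ''
        (((Finset.univ : Finset (Fin (n+1))).sym 3 : Finset (Sym (Fin (n+1)) 3)) :
          Set (Sym (Fin (n+1)) 3))) := by
      rw [Wspace]
      apply sup_le
      · apply iSup_le; intro i
        apply sup_le
        · refine (S3U_le_span i.1).trans (span_mono (Set.image_mono ?_))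
          intro x hx
          exact Finset.mem_coe.mpr (Finset.mem_sym_iff.mpr fun b _ => Finset.mem_univ b)
        · exact iSup_le fun j => tanCone_le_univ _ _
      · exact iSup_le fun i => tanCone_le_univ _ _
    haveI : FiniteDimensional ℂ (span ℂ (phi ''
        (((Finset.univ : Finset (Fin (n+1))).sym 3 : Finset (Sym (Fin (n+1)) 3)) :
          Set (Sym (Fin (n+1)) 3)))) :=
      FiniteDimensional.span_of_finite _ ((Finset.finite_toSet _).image _)
    have h0 := Submodule.finrank_mono hle
    have h1 : finrank ℂ (span ℂ (phi ''
        (((Finset.univ : Finset (Fin (n+1))).sym 3 : Finset (Sym (Fin (n+1)) 3)) :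
          Set (Sym (Fin (n+1)) 3)))) ≤ (n + 3).choose 3 := by
      rw [← Finset.coe_image]
      refine (finrank_span_finset_le_card _).trans ?_
      refine Finset.card_image_le.trans ?_
      rw [card_finset_sym]
      have : (Finset.univ : Finset (Fin (n+1))).card = n + 1 := by simp
      rw [this]
      have e : n + 1 + 3 - 1 = n + 3 := by omega
      rw [e]
    have := h0.trans h1
    exact_mod_cast this
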